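/- Let 𝔄 be an abelian category, and in 𝔄^Π consider an admissible object E^{•,•} together with, for each (a,b) ∈ Π, a morphism α^{a,b}: E^{a,b} → F^{a,b} between admissible objects, compatible with transitions. Suppose there exist an integer N ≥ 0 and a morphism β^{•,•}: F^{•+N,•+N} → E^{•,•} of Π-diagrams such that α^{•,•} ∘ β^{•,•} and β^{•,•} ∘ α^{•+N,•+N} are the canonical transition morphisms. Then for every (a,b) ∈ Π, the kernel and cokernel of α^{a,b}: E^{a,b} → F^{a,b} are annihilated in the following sense: the transition morphism ker α^{a+N,b+N} → ker α^{a,b} is zero, and similarly coker α^{a+N,b+N} → coker α^{a,b} is zero; consequently α becomes an isomorphism in the localization (S^f)⁻¹𝔄^Π. -/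

import Mathlib

open CategoryTheory CategoryTheory.Limits

universe v u

/-- `Π = {(a,b) ∈ ℤ² : a ≤ b}` with the reverse componentwise order. -/
structure PiSet : Type where
  a : ℤ
  b : ℤ
  le_ab : a ≤ b

instance : PartialOrder PiSet where
  le x y := y.a ≤ x.a ∧ y.b ≤ x.b
  le_refl x := ⟨le_refl _, le_refl _⟩
  le_trans x y z h h' := ⟨h'.1.trans h.1, h'.2.trans h.2⟩
  le_antisymm x y h h' := by
    cases x; cases y
    simp only [PiSet.mk.injEq]
    exact ⟨le_antisymm h'.1 h.1, le_antisymm h'.2 h.2⟩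

variable {𝔄 : Type u} [Category.{v} 𝔄] [Abelian 𝔄]

/-- An object `E` of `𝔄^Π` is *admissible* if for all `a ≤ b ≤ c` the sequence
`0 → E^{b,c} → E^{a,c} → E^{a,b} → 0` (given by the transition maps) is short exact. -/
def Admissible (E : PiSet ⥤ 𝔄) : Prop :=
  ∀ (a b c : ℤ) (hab : a ≤ b) (hbc : b ≤ c),
    ∃ w : E.map (homOfLE (show (⟨b, c, hbc⟩ : PiSet) ≤ ⟨a, c, hab.trans hbc⟩ from
            ⟨hab, le_refl c⟩)) ≫
          E.map (homOfLE (show (⟨a, c, hab.trans hbc⟩ : PiSet) ≤ ⟨a, b, hab⟩ from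
            ⟨le_refl a, hbc⟩)) = 0,
      (ShortComplex.mk _ _ w).ShortExact

/-- `M^f`: monotone maps `ℤ → ℤ` within bounded distance of the identity. -/
def inMf (φ : ℤ → ℤ) : Prop :=
  Monotone φ ∧ ∃ N : ℤ, 0 ≤ N ∧ ∀ i : ℤ, i - N ≤ φ i ∧ φ i ≤ i + N

/-- The diagram `φ̃(E)` with `φ̃(E)^{a,b} = E^{φ(a),φ(b)}`. -/
def tilde (φ : ℤ → ℤ) (hφ : Monotone φ) (E : PiSet ⥤ 𝔄) : PiSet ⥤ 𝔄 where
  obj p := E.obj ⟨φ p.a, φ p.b, hφ p.le_ab⟩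
  map {p q} h := E.map (homOfLE ⟨hφ (leOfHom h).1, hφ (leOfHom h).2⟩)
  map_id p := by
    rw [← E.map_id]
    exact congrArg E.map (Subsingleton.elim _ _)
  map_comp f g := by
    rw [← E.map_comp]
    exact congrArg E.map (Subsingleton.elim _ _)

/-- `φ̃` applied to a morphism of diagrams. -/
def tildeMap (φ : ℤ → ℤ) (hφ : Monotone φ) {E F : PiSet ⥤ 𝔄} (α : E ⟶ F) :
    tilde φ hφ E ⟶ tilde φ hφ F where
  app p := α.app ⟨φ p.a, φ p.b, hφ p.le_ab⟩
  naturality _ _ h := α.naturality _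

/-- The canonical morphism `φ̃(E) → ψ̃(E)` for `φ ≥ ψ` pointwise. -/
def canMap (φ ψ : ℤ → ℤ) (hφ : Monotone φ) (hψ : Monotone ψ) (h : ∀ i, ψ i ≤ φ i)
    (E : PiSet ⥤ 𝔄) : tilde φ hφ E ⟶ tilde ψ hψ E where
  app p := E.map (homOfLE ⟨h _, h _⟩)
  naturality p q f := by
    dsimp [tilde]
    rw [← E.map_comp, ← E.map_comp]
    exact congrArg E.map (Subsingleton.elim _ _)

/-- The canonical morphism `φ̃(E) → E` for `φ ≥ id` pointwise. -/
def canToId (φ : ℤ → ℤ) (hφ : Monotone φ) (h : ∀ i, i ≤ φ i) (E : PiSet ⥤ 𝔄) :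
    tilde φ hφ E ⟶ E where
  app p := E.map (homOfLE ⟨h _, h _⟩)
  naturality p q f := by
    dsimp [tilde]
    rw [← E.map_comp, ← E.map_comp]
    exact congrArg E.map (Subsingleton.elim _ _)

/-- The class `S^f` of canonical morphisms `φ̃(E) → ψ̃(E)` for `φ ≥ ψ` in `M^f`. -/
def Sclf : MorphismProperty (PiSet ⥤ 𝔄) := fun X Y f =>
  ∃ (E : PiSet ⥤ 𝔄) (φ ψ : ℤ → ℤ) (hφ : inMf φ) (hψ : inMf ψ) (h : ∀ i, ψ i ≤ φ i)
    (hX : X = tilde φ hφ.1 E) (hY : Y = tilde ψ hψ.1 E),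
    f = eqToHom hX ≫ canMap φ ψ hφ.1 hψ.1 h E ≫ eqToHom hY.symm

lemma monotone_add (N : ℤ) : Monotone (fun i : ℤ => i + N) :=
  fun _ _ h => by dsimp only; omega

/-- the index `(a+N, b+N)` -/
def pshift (N : ℤ) (p : PiSet) : PiSet := ⟨p.a + N, p.b + N, by have := p.le_ab; omega⟩

/-- the transition arrow `(a+N,b+N) ⟶ (a,b)` for `N ≥ 0` -/
def shiftHom (N : ℤ) (hN : 0 ≤ N) (p : PiSet) : pshift N p ⟶ p :=
  homOfLE ⟨le_add_of_nonneg_right hN, le_add_of_nonneg_right hN⟩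

lemma tilde_id (E : PiSet ⥤ 𝔄) : tilde id monotone_id E = E := by
  refine CategoryTheory.Functor.ext (fun p => rfl) fun p q f => ?_
  simp only [tilde, eqToHom_refl, Category.comp_id, Category.id_comp]
  exact ((Category.id_comp _).trans (Category.comp_id _)).symm

lemma canToId_mem (φ : ℤ → ℤ) (hφ : inMf φ) (h : ∀ i, i ≤ φ i) (E : PiSet ⥤ 𝔄) :
    Sclf (canToId φ hφ.1 h E) := by
  refine ⟨E, φ, id, hφ, ⟨monotone_id, 0, le_refl 0, fun i => by simp⟩, h, rfl,
    (tilde_id E).symm, ?_⟩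
  ext p
  simp only [NatTrans.comp_app, eqToHom_refl, Category.id_comp, eqToHom_app]
  simp only [canToId, canMap, NatTrans.id_app, Category.comp_id]
  exact (Category.comp_id _).symm

/-- If a morphism `α : E → F` of admissible `Π`-diagrams admits an `N`-shifted
inverse `β`, then the transition morphisms `ker α^{a+N,b+N} → ker α^{a,b}` and
`coker α^{a+N,b+N} → coker α^{a,b}` vanish, and `α` becomes an isomorphism in
the localization `(S^f)⁻¹𝔄^Π`. -/
theorem shifted_inverse_kills_ker_coker (E F : PiSet ⥤ 𝔄)
    (hE : Admissible E) (hF : Admissible F) (α : E ⟶ F)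
    (N : ℤ) (hN : 0 ≤ N)
    (β : tilde (fun i => i + N) (monotone_add N) F ⟶ E)
    (hβα : β ≫ α = canToId (fun i => i + N) (monotone_add N)
      (fun i => le_add_of_nonneg_right hN) F)
    (hαβ : tildeMap (fun i => i + N) (monotone_add N) α ≫ β
      = canToId (fun i => i + N) (monotone_add N) (fun i => le_add_of_nonneg_right hN) E) :
    (∀ p : PiSet,
      kernel.map (α.app (pshift N p)) (α.app p)
        (E.map (shiftHom N hN p)) (F.map (shiftHom N hN p))
        (α.naturality (shiftHom N hN p)).symm = 0) ∧
    (∀ p : PiSet,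
      cokernel.map (α.app (pshift N p)) (α.app p)
        (E.map (shiftHom N hN p)) (F.map (shiftHom N hN p))
        (α.naturality (shiftHom N hN p)).symm = 0) ∧
    IsIso ((Sclf (𝔄 := 𝔄)).Q.map α) := by
  have hE' : ∀ p : PiSet, E.map (shiftHom N hN p) = α.app (pshift N p) ≫ β.app p := by
    intro p
    have h1 : E.map (shiftHom N hN p)
        = (canToId (fun i => i + N) (monotone_add N)
            (fun i => le_add_of_nonneg_right hN) E).app p :=
      congrArg E.map (Subsingleton.elim _ _)
    rw [h1, ← hαβ]
    rfl
  have hF' : ∀ p : PiSet, F.map (shiftHom N hN p) = β.app p ≫ α.app p := by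
    intro p
    have h1 : F.map (shiftHom N hN p)
        = (canToId (fun i => i + N) (monotone_add N)
            (fun i => le_add_of_nonneg_right hN) F).app p :=
      congrArg F.map (Subsingleton.elim _ _)
    rw [h1, ← hβα]
    rfl
  refine ⟨?_, ?_, ?_⟩
  · intro p
    rw [← cancel_mono (kernel.ι (α.app p))]
    simp only [kernel.lift_ι, zero_comp]
    rw [hE' p]
    exact (kernel.condition_assoc _ _).trans zero_comp
  · intro p
    rw [← cancel_epi (cokernel.π (α.app (pshift N p)))]
    simp only [cokernel.π_desc, comp_zero]
    rw [hF' p]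
    exact (Category.assoc _ _ _).trans ((congrArg _ (cokernel.condition _)).trans comp_zero)
  · set L := (Sclf (𝔄 := 𝔄)).Q with hL
    have hinv : (Sclf (𝔄 := 𝔄)).IsInvertedBy L := Localization.inverts L Sclf
    have hNmf : inMf (fun i : ℤ => i + N) :=
      ⟨monotone_add N, N, hN, fun i => ⟨by show i - N ≤ i + N; linarith, le_refl _⟩⟩
    have hsE : IsIso (L.map (canToId (fun i => i + N) (monotone_add N)
        (fun i => le_add_of_nonneg_right hN) E)) :=
      hinv _ (canToId_mem _ hNmf _ E)
    have hsF : IsIso (L.map (canToId (fun i => i + N) (monotone_add N)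
        (fun i => le_add_of_nonneg_right hN) F)) :=
      hinv _ (canToId_mem _ hNmf _ F)
    have hba : IsIso (L.map β ≫ L.map α) := by rw [← L.map_comp, hβα]; exact hsF
    have hab : IsIso (L.map (tildeMap (fun i => i + N) (monotone_add N) α) ≫ L.map β) := by
      rw [← L.map_comp, hαβ]; exact hsE
    set h := L.map (tildeMap (fun i => i + N) (monotone_add N) α)
    set b := L.map β
    set a := L.map α
    have hsec : (inv (h ≫ b) ≫ h) ≫ b = 𝟙 _ := by
      rw [Category.assoc, IsIso.inv_comp_eq, Category.comp_id]
    have hmono : Mono b := by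
      have : Mono (b ≫ a) := inferInstance
      exact mono_of_mono b a
    have hbiso : IsIso b := by
      refine ⟨inv (h ≫ b) ≫ h, ?_, hsec⟩
      rw [← cancel_mono b]
      rw [Category.assoc, hsec, Category.comp_id, Category.id_comp]
    have : a = inv b ≫ (b ≫ a) := by simp
    rw [this]
    infer_instance
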